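/- Let (E, ℰ, m) be a σ-finite measure space and φ : E → E a measure-preserving invertible transformation. Let A ∈ ℰ with 0 < m(A) < ∞, and for k ≥ 1 define A_k = {x ∈ Aᶜ : φ^k(x) ∈ A and φ^j(x) ∉ A for j = 1,…,k−1}, with A_0 = A. If φ is conservative (in the sense that m-almost every point of A returns to A, i.e. m(A ∖ ⋃_{k≥1} φ^{-k}(A)) = 0), then m(A_n) → 0 as n → ∞, and consequently (1/n)·m(⋃_{k=0}^{n-1} φ^{-k}(A)) → 0 as n → ∞. -/

import Mathlib

open MeasureTheory Filter Function
open scoped ENNReal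

/-- Kac-type lemma: for a conservative measure-preserving invertible transformation,
the measure of the set of points first entering `A` after `n` steps tends to `0`,
and consequently `m(⋃_{k<n} φ^{-k} A)/n → 0`. -/
theorem stmt0 {E : Type*} [MeasurableSpace E] (m : Measure E) [SigmaFinite m]
    (φ : E ≃ᵐ E) (hφ : MeasurePreserving φ m m)
    (A : Set E) (hA : MeasurableSet A) (hA0 : 0 < m A) (hA1 : m A < ∞)
    (Ak : ℕ → Set E)
    (hAk0 : Ak 0 = A)
    (hAk : ∀ k, 1 ≤ k →
      Ak k = {x | x ∉ A ∧ (⇑φ)^[k] x ∈ A ∧ ∀ j, 1 ≤ j → j < k → (⇑φ)^[j] x ∉ A})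
    (hcons : m (A \ ⋃ k : ℕ, (⇑φ)^[k + 1] ⁻¹' A) = 0) :
    Tendsto (fun n => m (Ak n)) atTop (nhds 0) ∧
      Tendsto (fun n : ℕ => m (⋃ k ∈ Finset.range n, (⇑φ)^[k] ⁻¹' A) / (n : ℝ≥0∞))
        atTop (nhds 0) := by
  classical
  set B : ℕ → Set E := fun k => (⇑φ)^[k] ⁻¹' A with hB
  have hφk : ∀ k, MeasurePreserving ((⇑φ)^[k]) m m := fun k => hφ.iterate k
  have hBmeas : ∀ k, MeasurableSet (B k) := fun k => (hφk k).measurable hA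
  have hmB : ∀ k, m (B k) = m A := fun k =>
    (hφk k).measure_preimage hA.nullMeasurableSet
  have hB0 : B 0 = A := by simp [hB]
  have hBsucc : ∀ k, B (k + 1) = ⇑φ ⁻¹' (B k) := by
    intro k
    simp [hB, Function.iterate_succ, Set.preimage_comp]
  -- representation of Ak as disjointed sets
  have hAkB : ∀ k, Ak k = B k \ ⋃ j ∈ Finset.range k, B j := by
    intro k
    rcases Nat.eq_zero_or_pos k with rfl | hk
    · simp [hAk0, hB0]
    · rw [hAk k hk]
      ext x
      simp only [Set.mem_diff, Set.mem_iUnion, Set.mem_setOf_eq, Finset.mem_range,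
        Set.mem_preimage, hB, exists_prop]
      constructor
      · rintro ⟨hxA, hxk, hj⟩
        refine ⟨hxk, ?_⟩
        rintro ⟨j, hjk, hxj⟩
        rcases Nat.eq_zero_or_pos j with rfl | hj1
        · exact hxA (by simpa using hxj)
        · exact hj j hj1 hjk hxj
      · rintro ⟨hxk, hj⟩
        exact ⟨fun hxA => hj ⟨0, hk, by simpa using hxA⟩, hxk,
          fun j hj1 hjk hxj => hj ⟨j, hjk, hxj⟩⟩
  have hAkmeas : ∀ k, MeasurableSet (Ak k) := by
    intro k
    rw [hAkB k]
    exact (hBmeas k).diff (Finset.measurableSet_biUnion _ fun j _ => hBmeas j)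
  have hAksub : ∀ k, Ak k ⊆ B k := fun k => (hAkB k) ▸ Set.diff_subset
  have hdisj : ∀ i j : ℕ, i < j → Disjoint (Ak i) (Ak j) := by
    intro i j hij
    rw [hAkB j]
    refine Set.disjoint_sdiff_right.mono_left ?_
    exact (hAksub i).trans (Set.subset_iUnion₂ (s := fun k _ => B k) i (Finset.mem_range.2 hij))
  have hAkfin : ∀ k, m (Ak k) ≠ ∞ := by
    intro k
    exact (lt_of_le_of_lt (le_trans (measure_mono (hAksub k)) (hmB k).le) hA1).ne
  -- the union of the B's equals the union of the Ak's
  have hUnion : ∀ n, ⋃ k ∈ Finset.range n, B k = ⋃ k ∈ Finset.range n, Ak k := by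
    intro n
    apply Set.Subset.antisymm
    · intro x hx
      simp only [Set.mem_iUnion, Finset.mem_range, exists_prop] at hx ⊢
      obtain ⟨k, hk, hxk⟩ := hx
      have hex : ∃ k, x ∈ B k := ⟨k, hxk⟩
      refine ⟨Nat.find hex, lt_of_le_of_lt (Nat.find_min' hex hxk) hk, ?_⟩
      rw [hAkB]
      refine ⟨Nat.find_spec hex, ?_⟩
      simp only [Set.mem_iUnion, Finset.mem_range, exists_prop, not_exists, not_and]
      exact fun j hj => Nat.find_min hex hj
    · exact Set.iUnion₂_mono fun k _ => hAksub k
  have hmeasU : ∀ n, m (⋃ k ∈ Finset.range n, B k) = ∑ k ∈ Finset.range n, m (Ak k) := by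
    intro n
    rw [hUnion n, measure_biUnion_finset ?_ (fun k _ => hAkmeas k)]
    intro i _ j _ hij
    rcases hij.lt_or_gt with h | h
    · exact hdisj i j h
    · exact (hdisj j i h).symm
  have hUfin : ∀ n, m (⋃ k ∈ Finset.range n, B k) ≠ ∞ := by
    intro n
    rw [hmeasU n]
    exact (ENNReal.sum_lt_top.2 fun k _ => lt_top_iff_ne_top.2 (hAkfin k)).ne
  -- key identity : m (Ak n) = m (A \ ⋃_{1 ≤ k ≤ n} B k)
  set C : ℕ → Set E := fun n => A \ ⋃ k ∈ Finset.Icc 1 n, B k with hC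
  have hVU : ∀ n, (⋃ k ∈ Finset.Icc 1 n, B k) = ⇑φ ⁻¹' (⋃ k ∈ Finset.range n, B k) := by
    intro n
    rw [Set.preimage_iUnion₂]
    apply Set.Subset.antisymm
    · refine Set.iUnion₂_subset fun k hk => ?_
      simp only [Finset.mem_Icc] at hk
      obtain ⟨j, rfl⟩ := Nat.exists_eq_add_of_le hk.1
      rw [add_comm, hBsucc j]
      exact Set.subset_iUnion₂ (s := fun k _ => ⇑φ ⁻¹' B k) j (Finset.mem_range.2 (by omega))
    · refine Set.iUnion₂_subset fun k hk => ?_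
      simp only [Finset.mem_range] at hk
      rw [← hBsucc k]
      exact Set.subset_iUnion₂ (s := fun k _ => B k) (k+1) (Finset.mem_Icc.2 (by omega))
  have hkey : ∀ n, m (Ak n) = m (C n) := by
    intro n
    have h1 : (⋃ k ∈ Finset.range (n + 1), B k)
        = (⋃ k ∈ Finset.Icc 1 n, B k) ∪ A := by
      ext x
      simp only [Set.mem_iUnion, Finset.mem_range, Finset.mem_Icc, Set.mem_union, exists_prop]
      constructor
      · rintro ⟨k, hk, hxk⟩
        rcases Nat.eq_zero_or_pos k with rfl | hk1
        · exact Or.inr (by rwa [hB0] at hxk)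
        · exact Or.inl ⟨k, ⟨hk1, by omega⟩, hxk⟩
      · rintro (⟨k, hk, hxk⟩ | hxA)
        · exact ⟨k, by omega, hxk⟩
        · exact ⟨0, by omega, by rwa [hB0]⟩
    have h2 : m ((⋃ k ∈ Finset.Icc 1 n, B k) ∪ A)
        = m (⋃ k ∈ Finset.Icc 1 n, B k) + m (C n) := by
      rw [hC]
      rw [← measure_union' Set.disjoint_sdiff_right
        (Finset.measurableSet_biUnion _ fun j _ => hBmeas j), Set.union_diff_self]
    have h3 : m (⋃ k ∈ Finset.Icc 1 n, B k) = m (⋃ k ∈ Finset.range n, B k) := by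
      rw [hVU n]
      exact hφ.measure_preimage
        (Finset.measurableSet_biUnion _ fun j _ => hBmeas j).nullMeasurableSet
    have h4 := hmeasU (n + 1)
    rw [Finset.sum_range_succ, h1, h2, h3, ← hmeasU n] at h4
    exact ((ENNReal.add_right_inj (hUfin n)).1 h4).symm
  -- first conclusion
  have hCmeas : ∀ n, MeasurableSet (C n) :=
    fun n => hA.diff (Finset.measurableSet_biUnion _ fun j _ => hBmeas j)
  have hCanti : Antitone C := by
    intro a b hab
    exact Set.diff_subset_diff_right (Set.biUnion_subset_biUnion_left
      (Finset.Icc_subset_Icc_right hab))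
  have hCiInter : (⋂ n, C n) = A \ ⋃ k : ℕ, (⇑φ)^[k + 1] ⁻¹' A := by
    ext x
    constructor
    · intro h
      have h1 := Set.mem_iInter.1 h 1
      refine ⟨h1.1, ?_⟩
      intro hx
      obtain ⟨k, hk⟩ := Set.mem_iUnion.1 hx
      have h2 := (Set.mem_iInter.1 h (k + 1)).2
      exact h2 (Set.mem_iUnion₂.2 ⟨k + 1, Finset.mem_Icc.2 (by omega), hk⟩)
    · rintro ⟨hxA, hx⟩
      refine Set.mem_iInter.2 fun n => ⟨hxA, fun hmem => hx ?_⟩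
      obtain ⟨k, hk, hxk⟩ := Set.mem_iUnion₂.1 hmem
      have hk1 : 1 ≤ k := (Finset.mem_Icc.1 hk).1
      obtain ⟨j, rfl⟩ := Nat.exists_eq_add_of_le hk1
      exact Set.mem_iUnion.2 ⟨j, by rwa [add_comm] at hxk⟩
  have htend1 : Tendsto (fun n => m (Ak n)) atTop (nhds 0) := by
    have := tendsto_measure_iInter_atTop (μ := m) (s := C)
      (fun n => (hCmeas n).nullMeasurableSet) hCanti
      ⟨0, by simp [hC]; exact ((measure_mono Set.diff_subset).trans_lt hA1).ne⟩
    rw [hCiInter, hcons] at this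
    have heq : (fun n => m (Ak n)) = m ∘ C := funext fun n => hkey n
    rw [heq]
    exact this
  refine ⟨htend1, ?_⟩
  -- second conclusion via Cesàro
  have ha : Tendsto (fun n => (m (Ak n)).toReal) atTop (nhds 0) := by
    have := (ENNReal.tendsto_toReal (by simp : (0 : ℝ≥0∞) ≠ ∞)).comp htend1
    simpa [Function.comp_def] using this
  have hc := ha.cesaro
  have hfin : ∀ n : ℕ, m (⋃ k ∈ Finset.range n, B k) / (n : ℝ≥0∞) ≠ ∞ := by
    intro n
    rcases Nat.eq_zero_or_pos n with rfl | hn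
    · simp
    · exact (ENNReal.div_lt_top (hUfin n) (by exact_mod_cast hn.ne')).ne
  have hEq : (fun n : ℕ => (m (⋃ k ∈ Finset.range n, B k) / (n : ℝ≥0∞)).toReal)
      = fun n : ℕ => (n : ℝ)⁻¹ • ∑ k ∈ Finset.range n, (m (Ak k)).toReal := by
    funext n
    rw [ENNReal.toReal_div, hmeasU n, ENNReal.toReal_sum (fun k _ => hAkfin k)]
    simp [smul_eq_mul, div_eq_inv_mul]
  have h5 : Tendsto (fun n : ℕ => (m (⋃ k ∈ Finset.range n, B k) / (n : ℝ≥0∞)).toReal)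
      atTop (nhds 0) := by rw [hEq]; exact hc
  have h6 := (ENNReal.tendsto_toReal_iff hfin (x := 0) (by simp)).1 (by simpa using h5)
  exact h6
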